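/- In the category of chain complexes of ℤ_(p)-modules (or of (E(1)_*, E(1)_*E(1))-comodules), with the monomorphisms as cofibrations, the pushout-product axiom fails: take f to be the inclusion of PI into P(I ⊗ ℚ) and g the map 0 → P(I ⊗ ℤ/p); then the pushout product f □ g is the map P(I ⊗ ℤ/p) → 0, which is not a monomorphism. -/

import Mathlib

/-!
STATEMENT 9: The pushout-product axiom fails for the monomorphism cofibrations:
with `f : ℤ_(p) → ℚ` the inclusion (unit → rationalized unit) and `g : 0 → ℤ/p`, the
pushout product `f □ g` is the map `ℤ/p → 0` (since `ℚ ⊗ ℤ/p = 0`), which is not a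
monomorphism.
-/

open CategoryTheory CategoryTheory.Limits CategoryTheory.MonoidalCategory

instance span_p_isPrime (p : ℕ) [hp : Fact p.Prime] : (Ideal.span {(p : ℤ)}).IsPrime := by
  rw [Ideal.span_singleton_prime (by exact_mod_cast hp.out.ne_zero)]
  exact_mod_cast Int.prime_iff_natAbs_prime.mpr (by simpa using hp.out)

/-- The `p`-local integers `ℤ_(p)`. -/
abbrev Zp (p : ℕ) [Fact p.Prime] := Localization.AtPrime (Ideal.span {(p : ℤ)})

/-- The pushout product `f □ g` of two morphisms in a monoidal category:
the induced map `(V ⊗ W) ⊔_{U ⊗ W} (U ⊗ X) ⟶ V ⊗ X`. -/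
noncomputable def pushoutProd {C : Type*} [Category C] [MonoidalCategory C] {U V W X : C}
    (f : U ⟶ V) (g : W ⟶ X) [HasPushout (U ◁ g) (f ▷ W)] :
    pushout (U ◁ g) (f ▷ W) ⟶ V ⊗ X :=
  pushout.desc (f ▷ X) (V ◁ g) (by rw [whisker_exchange])

set_option maxHeartbeats 1600000 in
/-- The pushout product of `ℤ_(p) → ℚ` and `0 → ℤ/p` is (isomorphic to) the map
`ℤ/p → 0`; in particular it is not a monomorphism, so the pushout-product axiom fails for
the monomorphism cofibrations. -/
theorem pushout_product_axiom_fails (p : ℕ) [Fact p.Prime] (hodd : p ≠ 2) :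
    let R := Zp p
    let f : ModuleCat.of R R ⟶ ModuleCat.of R (FractionRing R) :=
      ModuleCat.ofHom (@Algebra.linearMap R (FractionRing R) _ _ OreLocalization.instAlgebra)
    let g : ModuleCat.of R PUnit ⟶ ModuleCat.of R (R ⧸ Ideal.span {(p : R)}) := 0
    ¬ Mono (pushoutProd f g) ∧
    IsZero (ModuleCat.of R (FractionRing R) ⊗ ModuleCat.of R (R ⧸ Ideal.span {(p : R)})) ∧
    Nonempty ((pushout (ModuleCat.of R R ◁ g) (f ▷ ModuleCat.of R PUnit)) ≅
      ModuleCat.of R (R ⧸ Ideal.span {(p : R)})) := by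
  intro R f g
  set K := FractionRing R with hK
  set M := R ⧸ Ideal.span {(p : R)} with hM
  letI : Algebra R K := OreLocalization.instAlgebra
  -- K ⊗ M is zero
  haveI hsub : Subsingleton (TensorProduct R K M) := by
    have hu : IsUnit (algebraMap R K (p : R)) := by
      have : CharZero R := charZero_of_injective_algebraMap
        (IsLocalization.injective R (Ideal.span {(p:ℤ)}).primeCompl_le_nonZeroDivisors)
      rw [isUnit_iff_ne_zero]
      have h0 : ((p : R)) ≠ 0 := by exact_mod_cast Fact.out (p := p.Prime) |>.ne_zero
      exact fun h => h0 ((map_eq_zero_iff _ (IsFractionRing.injective R K)).mp h)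
    obtain ⟨u, hu⟩ := hu
    constructor
    intro x y
    have key : ∀ z : TensorProduct R K M, z = 0 := by
      intro z
      induction z using TensorProduct.induction_on with
      | zero => rfl
      | tmul a m =>
        have ha : a = (p : R) • ((↑u⁻¹ : K) * a) := by
          rw [Algebra.smul_def, ← hu, ← mul_assoc, Units.mul_inv, one_mul]
        have hm : (p : R) • m = 0 := by
          obtain ⟨m, rfl⟩ := Submodule.Quotient.mk_surjective _ m
          rw [← Submodule.Quotient.mk_smul, Submodule.Quotient.mk_eq_zero]
          exact Ideal.mul_mem_right m _ (Ideal.mem_span_singleton_self _)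
        rw [ha, TensorProduct.smul_tmul, hm, TensorProduct.tmul_zero]
      | add x y hx hy => rw [hx, hy, add_zero]
    rw [key x, key y]
  haveI : Subsingleton ↑(ModuleCat.of R K ⊗ ModuleCat.of R M) := hsub
  haveI h2 : Subsingleton ↑(ModuleCat.of R R ⊗ ModuleCat.of R PUnit) :=
    inferInstanceAs (Subsingleton (TensorProduct R R PUnit))
  haveI h3 : Subsingleton ↑(ModuleCat.of R K ⊗ ModuleCat.of R PUnit) :=
    inferInstanceAs (Subsingleton (TensorProduct R K PUnit))
  have hKM : IsZero (ModuleCat.of R K ⊗ ModuleCat.of R M) :=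
    ModuleCat.isZero_of_subsingleton _
  have hsrc : IsZero (ModuleCat.of R R ⊗ ModuleCat.of R PUnit) :=
    ModuleCat.isZero_of_subsingleton _
  have hKP : IsZero (ModuleCat.of R K ⊗ ModuleCat.of R PUnit) :=
    ModuleCat.isZero_of_subsingleton _
  -- the pushout is isomorphic to R ⊗ M ≅ M
  have e : (pushout (ModuleCat.of R R ◁ g) (f ▷ ModuleCat.of R PUnit)) ≅
      ModuleCat.of R M := by
    refine ?_ ≪≫ (TensorProduct.lid R M).toModuleIso
    exact
      { hom := pushout.desc (𝟙 _) 0 (by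
          apply hsrc.eq_of_src)
        inv := pushout.inl _ _
        hom_inv_id := by
          apply pushout.hom_ext
          · simp only [pushout.inl_desc_assoc, Category.id_comp, Category.comp_id]
          · apply hKP.eq_of_src
        inv_hom_id := pushout.inl_desc _ _ _ }
  refine ⟨?_, hKM, ⟨e⟩⟩
  -- not a mono
  intro hmono
  have hP : IsZero (pushout (ModuleCat.of R R ◁ g) (f ▷ ModuleCat.of R PUnit)) :=
    IsZero.of_mono (pushoutProd f g) hKM
  have hMz : IsZero (ModuleCat.of R M) := hP.of_iso e.symm
  -- but M is nontrivial
  have hne : Ideal.span {(p : R)} ≠ ⊤ := by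
    rw [Ne, Ideal.span_singleton_eq_top]
    intro h
    have := (IsLocalization.AtPrime.isUnit_to_map_iff (Zp p) (Ideal.span {(p:ℤ)}) (p:ℤ)).mp
      (by simpa using h)
    exact this (Ideal.mem_span_singleton_self _)
  haveI : Nontrivial M := Ideal.Quotient.nontrivial_iff.mpr hne
  have h1 : (𝟙 (ModuleCat.of R M)) = 0 := hMz.eq_of_src _ _
  obtain ⟨a, b, hab⟩ := exists_pair_ne M
  apply hab
  have ha : a = (𝟙 (ModuleCat.of R M)) a := rfl
  have hb : b = (𝟙 (ModuleCat.of R M)) b := rfl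
  rw [ha, hb, h1]
  rfl
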